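/- Let k ≥ 2 and let α be the dominant root of Ψ_k(x). If r > 1 is an integer with r − 1 < 2^(k/2), then (2α − 1) f_k(α) α^(r−1) = 3·2^(r−2) + 3·2^(r−1)·η + δ/2 + η·δ for some real numbers δ, η with |δ| < 2^(r+2)/2^(k/2) and |η| < 2k/2^k. -/

import Mathlib

set_option maxHeartbeats 1000000


/-- For k ≥ 2 and an integer r > 1 with r − 1 < 2^(k/2), one has
    (2α − 1) f_k(α) α^(r−1) = 3·2^(r−2) + 3·2^(r−1)·η + δ/2 + η·δ for some real
    δ, η with |δ| < 2^(r+2)/2^(k/2) and |η| < 2k/2^k. -/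
theorem lucas_dominant_term_estimate (k : ℕ) (hk : 2 ≤ k)
    (α : ℝ) (hα1 : 1 < α) (hα2 : α < 2)
    (hroot : α ^ k = ∑ i ∈ Finset.range k, α ^ i)
    (r : ℕ) (hr : 1 < r) (hrk : (r : ℝ) - 1 < (2 : ℝ) ^ ((k : ℝ) / 2)) :
    ∃ δ η : ℝ,
      (2 * α - 1) * ((α - 1) / (2 + (k + 1) * (α - 2))) * α ^ (r - 1)
          = 3 * 2 ^ (r - 2) + 3 * 2 ^ (r - 1) * η + δ / 2 + η * δ ∧
      |δ| < 2 ^ (r + 2) / (2 : ℝ) ^ ((k : ℝ) / 2) ∧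
      |η| < 2 * k / 2 ^ k := by
  have hα0 : (0:ℝ) < α := by linarith
  have hkR : (2:ℝ) ≤ (k:ℝ) := by exact_mod_cast hk
  -- key equation : α^k * (2 - α) = 1
  have hgs : (∑ i ∈ Finset.range k, α ^ i) * (α - 1) = α ^ k - 1 := geom_sum_mul α k
  rw [hroot] at hgs
  have hkey : α ^ k * (2 - α) = 1 := by linear_combination -hgs + (2-α)*hroot
  -- α^k > k
  have hSk : (k:ℝ) < α ^ k := by
    rw [hroot]
    calc (k:ℝ) = ∑ _i ∈ Finset.range k, (1:ℝ) := by simp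
    _ < ∑ i ∈ Finset.range k, α ^ i := by
        apply Finset.sum_lt_sum
        · intro i _; exact one_le_pow₀ hα1.le
        · exact ⟨1, Finset.mem_range.mpr (by omega), by simpa using hα1⟩
  have hε0 : 0 < 2 - α := by linarith
  have hαk_pos : (0:ℝ) < α ^ k := pow_pos hα0 k
  -- 2 - α < 1/k
  have hε_lt : 2 - α < 1 / (k:ℝ) := by
    rw [lt_div_iff₀ (by positivity)]
    calc (2 - α) * (k:ℝ) < (2 - α) * α ^ k := by
          exact mul_lt_mul_of_pos_left hSk hε0
    _ = 1 := by linarith [hkey]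
  have hinvk : (1:ℝ)/(k:ℝ) ≤ 1/2 := by
    apply one_div_le_one_div_of_le <;> linarith
  have hεhalf : 2 - α ≤ 1/2 := by linarith
  -- Bernoulli: 2^(k-1) ≤ (2 - 1/k)^k
  have hb : (2:ℝ)^(k-1) ≤ ((2:ℝ) - 1/(k:ℝ))^k := by
    have hkne : (k:ℝ) ≠ 0 := by positivity
    have hb1 : 1/(2*(k:ℝ)) ≤ 1 := by
      rw [div_le_one (by positivity)]; linarith
    have hbern := one_add_mul_le_pow (a := -(1/(2*(k:ℝ)))) (by linarith) k
    have he : 1 + (k:ℝ) * -(1/(2*(k:ℝ))) = 1/2 := by field_simp; ring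
    rw [he] at hbern
    have hsplit : ((2:ℝ) - 1/(k:ℝ)) = 2 * (1 + -(1/(2*(k:ℝ)))) := by field_simp; ring
    rw [hsplit, mul_pow]
    have hp : (2:ℝ)^k = 2^(k-1) * 2 := by
      rw [← pow_succ]; congr 1; omega
    nlinarith [pow_pos (show (0:ℝ) < 2 by norm_num) (k-1)]
  -- hence 2^(k-1) < α^k and 2 - α < 2/2^k
  have hαk2 : (2:ℝ)^(k-1) < α ^ k := by
    refine lt_of_le_of_lt hb ?_
    have h1 : (0:ℝ) ≤ 2 - 1/(k:ℝ) := by linarith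
    exact pow_lt_pow_left₀ (by linarith [hε_lt]) h1 (by omega)
  have hεb : 2 - α < 2 / 2^k := by
    rw [lt_div_iff₀ (by positivity)]
    have hp : (2:ℝ)^k = 2^(k-1) * 2 := by
      rw [← pow_succ]; congr 1; omega
    nlinarith [mul_lt_mul_of_pos_left hαk2 hε0]
  -- denominator bound
  have hnat : ∀ m : ℕ, 2 ≤ m → 4*(m+1) ≤ 3*2^m := by
    intro m hm
    induction m, hm using Nat.le_induction with
    | base => norm_num
    | succ n hn ih =>
      have h2 : 1 ≤ 2^n := Nat.one_le_two_pow
      rw [pow_succ]; omega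
  have hDε : ((k:ℝ)+1) * (2 - α) < 3/2 := by
    have hcast : (4:ℝ)*((k:ℝ)+1) ≤ 3*2^k := by exact_mod_cast hnat k hk
    have h2 : ((k:ℝ)+1) * (2/2^k) ≤ 3/2 := by
      rw [← mul_div_assoc, div_le_div_iff₀ (by positivity) (by norm_num)]
      nlinarith
    calc ((k:ℝ)+1) * (2 - α) < ((k:ℝ)+1) * (2/2^k) :=
          mul_lt_mul_of_pos_left hεb (by positivity)
    _ ≤ 3/2 := h2
  set D : ℝ := 2 + ((k:ℝ)+1)*(α-2) with hDdef
  have hD1 : 1/2 < D := by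
    have : ((k:ℝ)+1)*(α-2) = -(((k:ℝ)+1)*(2-α)) := by ring
    rw [hDdef, this]; linarith
  have hDne : D ≠ 0 := by linarith
  refine ⟨3*(α^(r-1) - 2^(r-1)), (2*α-1)*(α-1)/(3*D) - 1/2, ?_, ?_, ?_⟩
  · -- the algebraic identity
    have hQ : (2:ℝ)^(r-1) = 2*2^(r-2) := by
      rw [show r-1 = (r-2)+1 from by omega, pow_succ]; ring
    rw [hQ]
    field_simp
    ring
  · -- bound on δ
    have hαr : α^(r-1) < (2:ℝ)^(r-1) :=
      pow_lt_pow_left₀ hα2 hα0.le (by omega)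
    rw [abs_of_neg (by nlinarith)]
    set T : ℝ := (2:ℝ) ^ ((k:ℝ)/2) with hTdef
    have hT0 : 0 < T := Real.rpow_pos_of_pos (by norm_num) _
    have hT2 : T * T = (2:ℝ)^k := by
      rw [hTdef, ← Real.rpow_add (by norm_num : (0:ℝ) < 2)]
      rw [show (k:ℝ)/2 + (k:ℝ)/2 = (k:ℝ) by ring, Real.rpow_natCast]
    rw [lt_div_iff₀ hT0]
    -- geometric sum factorization
    set S : ℝ := ∑ i ∈ Finset.range (r-1), 2^i * α^(r-1-1-i) with hSdef
    have hsub : (2:ℝ)^(r-1) - α^(r-1) = (2 - α) * S := by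
      have := geom_sum₂_mul (2:ℝ) α (r-1)
      rw [← hSdef] at this
      linear_combination -this
    have hS0 : 0 ≤ S := by
      apply Finset.sum_nonneg
      intro i _; positivity
    have hSle : S ≤ ((r:ℝ)-1) * 2^(r-2) := by
      have hcard : S ≤ (Finset.range (r-1)).card • (2:ℝ)^(r-2) := by
        apply Finset.sum_le_card_nsmul
        intro i hi
        rw [Finset.mem_range] at hi
        calc (2:ℝ)^i * α^(r-1-1-i) ≤ 2^i * 2^(r-1-1-i) :=
              mul_le_mul_of_nonneg_left
                (pow_le_pow_left₀ hα0.le hα2.le _) (by positivity)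
        _ = 2^(r-2) := by rw [← pow_add]; congr 1; omega
      rwa [Finset.card_range, nsmul_eq_mul,
        show ((r-1:ℕ):ℝ) = (r:ℝ)-1 by push_cast [Nat.cast_sub (by omega : 1 ≤ r)]; ring] at hcard
    have hr1pos : (0:ℝ) < (r:ℝ) - 1 := by
      have : (2:ℝ) ≤ (r:ℝ) := by exact_mod_cast hr
      linarith
    have hp2 : (0:ℝ) < (2:ℝ)^(r-2) := by positivity
    have hSlt : S < T * 2^(r-2) := by
      calc S ≤ ((r:ℝ)-1) * 2^(r-2) := hSle
      _ < T * 2^(r-2) := by exact mul_lt_mul_of_pos_right hrk hp2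
    have hfin : (2:ℝ)^(r+2) = 16 * 2^(r-2) := by
      rw [show r+2 = (r-2)+4 from by omega, pow_add]; ring
    have step1 : -((3:ℝ)*(α^(r-1) - 2^(r-1))) * T = 3*T*((2-α)*S) := by
      rw [show -((3:ℝ)*(α^(r-1) - 2^(r-1))) = 3*(2^(r-1) - α^(r-1)) from by ring,
        hsub]; ring
    rw [step1, hfin]
    have step2 : (3:ℝ)*T*((2-α)*S) ≤ 3*T*((2-α)*(T*2^(r-2))) := by
      have : (2-α)*S ≤ (2-α)*(T*2^(r-2)) :=
        mul_le_mul_of_nonneg_left hSlt.le hε0.le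
      nlinarith
    have step3 : (3:ℝ)*T*((2-α)*(T*2^(r-2))) < 3*T*((2/2^k)*(T*2^(r-2))) := by
      have h1 : (2-α)*(T*2^(r-2)) < (2/2^k)*(T*2^(r-2)) :=
        mul_lt_mul_of_pos_right hεb (by positivity)
      nlinarith
    have step4 : (3:ℝ)*T*((2/2^k)*(T*2^(r-2))) = 6*2^(r-2) := by
      have h2kne : ((2:ℝ)^k) ≠ 0 := by positivity
      field_simp
      linear_combination 6 * hT2
    nlinarith
  · -- bound on η
    have hη : (2*α-1)*(α-1)/(3*D) - 1/2
        = ((2-α)*(3*(k:ℝ)-7+4*(2-α)))/(6*D) := by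
      field_simp
      ring
    rw [hη, abs_div, abs_of_pos (by linarith : (0:ℝ) < 6*D), abs_mul,
      abs_of_pos hε0]
    set M : ℝ := |3*(k:ℝ)-7+4*(2-α)| with hMdef
    have hM0 : 0 ≤ M := abs_nonneg _
    have hM : M ≤ 3*(k:ℝ) - 5 := by
      rw [hMdef, abs_le]
      constructor <;> nlinarith
    rw [div_lt_div_iff₀ (by linarith) (by positivity)]
    have hA : (2-α)*2^k < 2 := by
      have := (lt_div_iff₀ (show (0:ℝ) < 2^k by positivity)).mp hεb
      linarith
    have h1 : (2-α)*M*2^k ≤ 2*M := by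
      nlinarith
    have h2 : 2*M ≤ 6*(k:ℝ) - 10 := by linarith
    have h3 : 6*(k:ℝ) < 2*(k:ℝ)*(6*D) := by nlinarith
    linarith
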